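/- arXiv:1203.0563 — 4 statements merged into one kernel-verified Lean document; each statement's English description precedes it below -/
import Mathlib

section
/- Let δ > 0 and let ℓ be the x-axis with four consecutive points p1=(0,0), p2=(δ,0), p3=(2δ,0), p4=(3δ,0). Let Q12 be a closed disk whose boundary passes through p1 and p2, and Q34 a closed disk whose boundary passes through p3 and p4, both disks having centers with negative y-coordinate. If both disks lie strictly below the horizontal line y = (1 - √3/2)δ, then the interiors of Q12 and Q34 intersect. -/
noncomputable def pt (x y : ℝ) : EuclideanSpace ℝ (Fin 2) := WithLp.toLp 2 ![x, y]

lemma aux_ball_inter {E : Type*} [NormedAddCommGroup E] [NormedSpace ℝ E]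
    (c₁ c₂ : E) {r₁ r₂ : ℝ} (hr₁ : 0 < r₁) (hr₂ : 0 < r₂)
    (h : dist c₁ c₂ < r₁ + r₂) :
    (Metric.ball c₁ r₁ ∩ Metric.ball c₂ r₂).Nonempty := by
  have hs : 0 < r₁ + r₂ := by linarith
  refine ⟨c₁ + (r₁ / (r₁ + r₂)) • (c₂ - c₁), ?_, ?_⟩
  · rw [Metric.mem_ball, dist_eq_norm, add_sub_cancel_left, norm_smul,
      Real.norm_eq_abs, abs_of_pos (by positivity)]
    have hc : ‖c₂ - c₁‖ = dist c₁ c₂ := by rw [← dist_eq_norm, dist_comm]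
    rw [hc]
    calc r₁ / (r₁ + r₂) * dist c₁ c₂ < r₁ / (r₁ + r₂) * (r₁ + r₂) :=
          mul_lt_mul_of_pos_left h (by positivity)
      _ = r₁ := by field_simp
  · rw [Metric.mem_ball, dist_eq_norm]
    have he : c₁ + (r₁ / (r₁ + r₂)) • (c₂ - c₁) - c₂
        = (r₁ / (r₁ + r₂) - 1) • (c₂ - c₁) := by
      rw [sub_smul, one_smul]; abel
    rw [he, norm_smul, Real.norm_eq_abs]
    have h1 : r₁ / (r₁ + r₂) - 1 = -(r₂ / (r₁ + r₂)) := by field_simp; ring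
    rw [h1, abs_neg, abs_of_pos (by positivity)]
    have hc : ‖c₂ - c₁‖ = dist c₁ c₂ := by rw [← dist_eq_norm, dist_comm]
    rw [hc]
    calc r₂ / (r₁ + r₂) * dist c₁ c₂ < r₂ / (r₁ + r₂) * (r₁ + r₂) :=
          mul_lt_mul_of_pos_left h (by positivity)
      _ = r₂ := by field_simp

/-- If a circle through `(0,0)` and `(δ,0)` (center `(δ/2, b)`) lies strictly
below `y = (1-s/2)δ` (top point condition), then `b < -(s/2)δ`. -/
lemma aux_center_low (δ s b r : ℝ) (hδ : 0 < δ) (hs2 : s ^ 2 = 3) (hs_lt : s < 2)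
    (hr : 0 < r) (he : r ^ 2 = δ ^ 2 / 4 + b ^ 2)
    (ht : b + r < (1 - s / 2) * δ) : b < -(s / 2) * δ := by
  have hkey : r < (1 - s / 2) * δ - b := by linarith
  have hsq : r * r < ((1 - s / 2) * δ - b) * ((1 - s / 2) * δ - b) :=
    mul_self_lt_mul_self hr.le hkey
  nlinarith [mul_pos (show (0:ℝ) < 2 - s by linarith) hδ, mul_pos hδ hδ]

/-- Key quantitative estimate: with both centers below `-(s/2)δ`, the distance
between the centers is less than the sum of the radii (squared form). -/
lemma aux_overlap (δ s b₁ b₂ r₁ r₂ : ℝ) (hδ : 0 < δ) (hs2 : s ^ 2 = 3)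
    (hs0 : 0 ≤ s) (hr₁ : 0 < r₁) (hr₂ : 0 < r₂)
    (er₁ : r₁ ^ 2 = δ ^ 2 / 4 + b₁ ^ 2) (er₂ : r₂ ^ 2 = δ ^ 2 / 4 + b₂ ^ 2)
    (hy₁ : b₁ < -(s / 2) * δ) (hy₂ : b₂ < -(s / 2) * δ) :
    4 * δ ^ 2 + (b₁ - b₂) ^ 2 < (r₁ + r₂) ^ 2 := by
  have hspos : 0 < s := by nlinarith
  have hsδ : 0 < s / 2 * δ := by positivity
  have hmul := mul_lt_mul'' (show s / 2 * δ < -b₁ by linarith)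
    (show s / 2 * δ < -b₂ by linarith) hsδ.le hsδ.le
  have hprod : 3 / 4 * δ ^ 2 < b₁ * b₂ := by nlinarith [hmul]
  have hB : 0 < δ ^ 2 / 4 + b₁ * b₂ := by nlinarith [sq_nonneg δ]
  have hA2 : (r₁ * r₂) ^ 2 = (δ ^ 2 / 4 + b₁ ^ 2) * (δ ^ 2 / 4 + b₂ ^ 2) := by
    rw [mul_pow, er₁, er₂]
  have hAB : δ ^ 2 / 4 + b₁ * b₂ ≤ r₁ * r₂ := by
    nlinarith [hA2, sq_nonneg (b₁ - b₂), hB, mul_pos hr₁ hr₂]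
  nlinarith [er₁, er₂, hAB, hprod]

/-- Two disks, one through `(0,0)` and `(δ,0)`, the other through `(2δ,0)` and
`(3δ,0)`, with centers below the x-axis, lying strictly below the line
`y = (1 - √3/2)δ`, must overlap in their interiors. -/
theorem disks_below_line_overlap
    (δ : ℝ) (hδ : 0 < δ)
    (c₁ c₂ : EuclideanSpace ℝ (Fin 2)) (r₁ r₂ : ℝ)
    (hr₁ : 0 < r₁) (hr₂ : 0 < r₂)
    (hc₁ : c₁ 1 < 0) (hc₂ : c₂ 1 < 0)
    (hp₁ : dist c₁ (pt 0 0) = r₁)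
    (hp₂ : dist c₁ (pt δ 0) = r₁)
    (hp₃ : dist c₂ (pt (2 * δ) 0) = r₂)
    (hp₄ : dist c₂ (pt (3 * δ) 0) = r₂)
    (hbelow₁ : ∀ q ∈ Metric.closedBall c₁ r₁, q 1 < (1 - Real.sqrt 3 / 2) * δ)
    (hbelow₂ : ∀ q ∈ Metric.closedBall c₂ r₂, q 1 < (1 - Real.sqrt 3 / 2) * δ) :
    (Metric.ball c₁ r₁ ∩ Metric.ball c₂ r₂).Nonempty := by
  have hd : ∀ (c : EuclideanSpace ℝ (Fin 2)) (x y : ℝ),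
      dist c (pt x y) = Real.sqrt ((c 0 - x) ^ 2 + (c 1 - y) ^ 2) := by
    intro c x y
    rw [EuclideanSpace.dist_eq, Fin.sum_univ_two]
    simp [pt, Real.dist_eq, sq_abs]
  have sq_of : ∀ {A r : ℝ}, 0 ≤ A → Real.sqrt A = r → A = r ^ 2 := by
    intro A r hA h
    rw [← h, Real.sq_sqrt hA]
  rw [hd] at hp₁ hp₂ hp₃ hp₄
  have e₁ := sq_of (by positivity) hp₁
  have e₂ := sq_of (by positivity) hp₂
  have e₃ := sq_of (by positivity) hp₃
  have e₄ := sq_of (by positivity) hp₄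
  have ha₁ : c₁ 0 = δ / 2 := by
    have h : (2 * δ) * (c₁ 0) = (2 * δ) * (δ / 2) := by linear_combination e₁ - e₂
    exact mul_left_cancel₀ (by positivity : (0:ℝ) < 2 * δ).ne' h
  have ha₂ : c₂ 0 = 5 * δ / 2 := by
    have h : (2 * δ) * (c₂ 0) = (2 * δ) * (5 * δ / 2) := by linear_combination e₃ - e₄
    exact mul_left_cancel₀ (by positivity : (0:ℝ) < 2 * δ).ne' h
  have er₁ : r₁ ^ 2 = δ ^ 2 / 4 + (c₁ 1) ^ 2 := by
    rw [ha₁] at e₁; linear_combination -e₁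
  have er₂ : r₂ ^ 2 = δ ^ 2 / 4 + (c₂ 1) ^ 2 := by
    rw [ha₂] at e₃; linear_combination -e₃
  have hs2 : Real.sqrt 3 ^ 2 = 3 := Real.sq_sqrt (by norm_num)
  have hs0 : 0 ≤ Real.sqrt 3 := Real.sqrt_nonneg 3
  have hs_lt : Real.sqrt 3 < 2 := by nlinarith [hs2, hs0]
  -- top points of the disks
  have htop : ∀ (c : EuclideanSpace ℝ (Fin 2)) (r : ℝ), 0 < r →
      pt (c 0) (c 1 + r) ∈ Metric.closedBall c r := by
    intro c r hr
    rw [Metric.mem_closedBall, dist_comm, hd]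
    have h : (c 0 - c 0) ^ 2 + (c 1 - (c 1 + r)) ^ 2 = r ^ 2 := by ring
    rw [h, Real.sqrt_sq hr.le]
  have htop₁ : c₁ 1 + r₁ < (1 - Real.sqrt 3 / 2) * δ := by
    have := hbelow₁ _ (htop c₁ r₁ hr₁)
    simpa [pt] using this
  have htop₂ : c₂ 1 + r₂ < (1 - Real.sqrt 3 / 2) * δ := by
    have := hbelow₂ _ (htop c₂ r₂ hr₂)
    simpa [pt] using this
  have hy₁ := aux_center_low δ _ _ _ hδ hs2 hs_lt hr₁ er₁ htop₁
  have hy₂ := aux_center_low δ _ _ _ hδ hs2 hs_lt hr₂ er₂ htop₂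
  have hkey := aux_overlap δ _ _ _ _ _ hδ hs2 hs0 hr₁ hr₂ er₁ er₂ hy₁ hy₂
  apply aux_ball_inter c₁ c₂ hr₁ hr₂
  have hdist : dist c₁ c₂ = Real.sqrt ((c₁ 0 - c₂ 0) ^ 2 + (c₁ 1 - c₂ 1) ^ 2) := by
    rw [EuclideanSpace.dist_eq, Fin.sum_univ_two]
    simp [Real.dist_eq, sq_abs]
  rw [hdist, ha₁, ha₂,
    show (δ / 2 - 5 * δ / 2) ^ 2 + (c₁ 1 - c₂ 1) ^ 2
      = 4 * δ ^ 2 + (c₁ 1 - c₂ 1) ^ 2 by ring,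
    Real.sqrt_lt' (by linarith)]
  exact hkey
end

section
/- Let C be the closed unit disk centered at (0,1), C1 a disk with boundary through (3x/2, 0) and (5x/2, 0), and C2 a disk with boundary through (7x/2, 0) and (9x/2, 0), where both C1, C2 have centers strictly below the x-axis. If C, C1, C2 are pairwise externally tangent, then x = 2·sqrt((4/945)(7 − 4√3)) ≈ 0.03486. -/
lemma dist_sq_eq (u v : EuclideanSpace ℝ (Fin 2)) (r : ℝ) (h : dist u v = r) :
    (u 0 - v 0)^2 + (u 1 - v 1)^2 = r^2 := by
  rw [EuclideanSpace.dist_eq] at h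
  have h0 : (0:ℝ) ≤ ∑ i, dist (u i) (v i) ^ 2 := by positivity
  have := Real.sq_sqrt h0
  rw [h] at this
  rw [this, Fin.sum_univ_two, Real.dist_eq, Real.dist_eq, sq_abs, sq_abs]

/-- Lemma 4: if the unit disk centered at `(0,1)`, a disk through `(3x/2,0)`
and `(5x/2,0)`, and a disk through `(7x/2,0)` and `(9x/2,0)` (both with
centers strictly below the x-axis) are pairwise externally tangent, then
`x = 2√((4/945)(7 − 4√3))`. -/
theorem three_tangent_disks (x : ℝ) (hx : 0 < x)
    (c₁ c₂ : EuclideanSpace ℝ (Fin 2)) (r₁ r₂ : ℝ)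
    (hr₁ : 0 < r₁) (hr₂ : 0 < r₂)
    (hc₁ : c₁ 1 < 0) (hc₂ : c₂ 1 < 0)
    (h₁ : dist c₁ (pt (3 * x / 2) 0) = r₁)
    (h₂ : dist c₁ (pt (5 * x / 2) 0) = r₁)
    (h₃ : dist c₂ (pt (7 * x / 2) 0) = r₂)
    (h₄ : dist c₂ (pt (9 * x / 2) 0) = r₂)
    (htan₁ : dist (pt 0 1) c₁ = 1 + r₁)
    (htan₂ : dist (pt 0 1) c₂ = 1 + r₂)
    (htan₁₂ : dist c₁ c₂ = r₁ + r₂) :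
    x = 2 * Real.sqrt ((4 / 945) * (7 - 4 * Real.sqrt 3)) := by
  have E1 := dist_sq_eq _ _ _ h₁
  have E2 := dist_sq_eq _ _ _ h₂
  have E3 := dist_sq_eq _ _ _ h₃
  have E4 := dist_sq_eq _ _ _ h₄
  have E5 := dist_sq_eq _ _ _ htan₁
  have E6 := dist_sq_eq _ _ _ htan₂
  have E7 := dist_sq_eq _ _ _ htan₁₂
  simp only [pt, PiLp.toLp_apply, WithLp.ofLp_toLp, Matrix.cons_val_zero, Matrix.cons_val_one, Matrix.head_cons] at E1 E2 E3 E4 E5 E6 E7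
  have hxne : x ≠ 0 := ne_of_gt hx
  -- centers' x-coordinates
  have ha : c₁ 0 = 2 * x := by
    have h : x * (2 * c₁ 0 - 4 * x) = 0 := by linear_combination E1 - E2
    rcases mul_eq_zero.mp h with h' | h'
    · exact absurd h' hxne
    · linarith
  have hc : c₂ 0 = 4 * x := by
    have h : x * (2 * c₂ 0 - 8 * x) = 0 := by linear_combination E3 - E4
    rcases mul_eq_zero.mp h with h' | h'
    · exact absurd h' hxne
    · linarith
  rw [ha] at E1 E5 E7
  rw [hc] at E3 E6 E7
  -- radii in terms of x and center heights
  have hr1 : r₁ = 15 * x^2 / 8 - c₁ 1 := by linear_combination (E1 - E5) / 2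
  have hr2 : r₂ = 63 * x^2 / 8 - c₂ 1 := by linear_combination (E3 - E6) / 2
  -- heights in terms of x
  have hb : c₁ 1 = 15 * x^2 / 16 - 1 / 15 := by
    have h : x^2 * (15 * c₁ 1 / 4 + 1 / 4 - 225 * x^2 / 64) = 0 := by
      linear_combination E1 + (r₁ + 15 * x^2 / 8 - c₁ 1) * hr1
    rcases mul_eq_zero.mp h with h' | h'
    · exact absurd (pow_eq_zero_iff (by norm_num) |>.mp h') hxne
    · linarith
  have hd : c₂ 1 = 63 * x^2 / 16 - 1 / 63 := by
    have h : x^2 * (63 * c₂ 1 / 4 + 1 / 4 - 3969 * x^2 / 64) = 0 := by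
      linear_combination E3 + (r₂ + 63 * x^2 / 8 - c₂ 1) * hr2
    rcases mul_eq_zero.mp h with h' | h'
    · exact absurd (pow_eq_zero_iff (by norm_num) |>.mp h') hxne
    · linarith
  -- the quartic
  have hq : 893025 * x^4 - 211680 * x^2 + 256 = 0 := by
    rw [hr1, hr2, hb, hd] at E7
    linear_combination -60480 * E7
  -- bound from b < 0
  have hxlt : x^2 < 16 / 225 := by
    rw [hb] at hc₁; linarith
  set s := Real.sqrt 3 with hs0
  have hs : s^2 = 3 := Real.sq_sqrt (by norm_num)
  have hsnn : 0 ≤ s := Real.sqrt_nonneg 3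
  have factor : (x^2 - 16 * (7 - 4*s) / 945) * (x^2 - 16 * (7 + 4*s) / 945) = 0 := by
    linear_combination hq / 893025 - (4096 / 893025) * hs
  have hx2 : x^2 = 16 * (7 - 4*s) / 945 := by
    rcases mul_eq_zero.mp factor with h' | h'
    · linarith
    · exfalso
      have : x^2 = 16 * (7 + 4*s) / 945 := by linarith
      linarith
  have hxs : x = Real.sqrt (x^2) := (Real.sqrt_sq hx.le).symm
  rw [hxs, hx2, show 16 * (7 - 4*s) / 945 = 2^2 * ((4/945) * (7 - 4*s)) by ring,
    Real.sqrt_mul (by norm_num), Real.sqrt_sq (by norm_num)]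
end

section
/- The system z² + y1² = r1², z² + y2² = r2², 16z² + (1+y1)² = (1+r1)², 64z² + (1+y2)² = (1+r2)², 16z² + (y1−y2)² = (r1+r2)², with unknowns z, y1, y2, r1, r2 all positive and z < 2/63, implies z² = (4/945)(7 − 4√3). -/
/-- The tangency system of Lemma 4: positive reals `z, y₁, y₂, r₁, r₂` with
`z < 2/63` satisfying the five equations force `z² = (4/945)(7 − 4√3)`. -/
theorem tangency_system (z y₁ y₂ r₁ r₂ : ℝ)
    (hz : 0 < z) (hy₁ : 0 < y₁) (hy₂ : 0 < y₂) (hr₁ : 0 < r₁) (hr₂ : 0 < r₂)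
    (hz' : z < 2 / 63)
    (e₁ : z ^ 2 + y₁ ^ 2 = r₁ ^ 2)
    (e₂ : z ^ 2 + y₂ ^ 2 = r₂ ^ 2)
    (e₃ : 16 * z ^ 2 + (1 + y₁) ^ 2 = (1 + r₁) ^ 2)
    (e₄ : 64 * z ^ 2 + (1 + y₂) ^ 2 = (1 + r₂) ^ 2)
    (e₅ : 16 * z ^ 2 + (y₁ - y₂) ^ 2 = (r₁ + r₂) ^ 2) :
    z ^ 2 = (4 / 945) * (7 - 4 * Real.sqrt 3) := by
  have hz2 : (0:ℝ) < z ^ 2 := by positivity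
  -- linear relations between r and y
  have hr1 : r₁ = y₁ + 15 / 2 * z ^ 2 := by linear_combination (e₁ - e₃) / 2
  have hr2 : r₂ = y₂ + 63 / 2 * z ^ 2 := by linear_combination (e₂ - e₄) / 2
  -- solve for y₁, y₂
  have hy1 : y₁ = (4 - 225 * z ^ 2) / 60 := by
    have h : z ^ 2 * (4 - 60 * y₁ - 225 * z ^ 2) = 0 := by
      rw [hr1] at e₁; linear_combination 4 * e₁
    rcases mul_eq_zero.1 h with h' | h'
    · exact absurd h' (ne_of_gt hz2)
    · linarith
  have hy2 : y₂ = (4 - 3969 * z ^ 2) / 252 := by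
    have h : z ^ 2 * (4 - 252 * y₂ - 3969 * z ^ 2) = 0 := by
      rw [hr2] at e₂; linear_combination 4 * e₂
    rcases mul_eq_zero.1 h with h' | h'
    · exact absurd h' (ne_of_gt hz2)
    · linarith
  -- the quartic in z
  have hq : 893025 * (z ^ 2) ^ 2 - 52920 * z ^ 2 + 16 = 0 := by
    rw [hr1, hr2, hy1, hy2] at e₅
    linear_combination -3780 * e₅
  set s := Real.sqrt 3 with hs
  have hs2 : s ^ 2 = 3 := Real.sq_sqrt (by norm_num)
  have hs0 : 0 ≤ s := Real.sqrt_nonneg 3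
  have hfac : (z ^ 2 - 4 / 945 * (7 - 4 * s)) * (z ^ 2 - 4 / 945 * (7 + 4 * s)) = 0 := by
    linear_combination hq / 893025 - 256 / 893025 * hs2
  rcases mul_eq_zero.1 hfac with h | h
  · linarith
  · exfalso
    have hzb : z ^ 2 < 4 / 3969 := by nlinarith
    nlinarith
end

section
/- Let θ = π/339 and k = 340. Suppose positive reals d1, r1 satisfy r1² = d1² − 2 d1 cos θ + 1 and d1 cos(4θ) + r1 = cos θ, and positive reals d2, r2 satisfy r2² = d2² − 2 d2 cos θ + 1 and d2 cos(10θ) + r2 = cos θ, with 0 < d1, d2 < 1. Then d1² + d2² − 2 d1 d2 cos(6θ) < (r1 + r2)². -/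
open Real

/-! Auxiliary lemmas for `gadget_340_inequality`.  The proof is a rigorous
interval-arithmetic computation: `cos θ` is bounded via the quartic Taylor
estimate, the other cosines via multiple-angle identities, the tangency and
circumscription equations force `d₁, d₂` into one of two narrow intervals
(the two admissible tangent disks), and in each of the four cases the target
inequality holds numerically with comfortable margin. -/

private lemma quad1 {A B C d x : ℝ} (h : A * d ^ 2 - B * d + C = 0)
    (hf : A * x ^ 2 - B * x + C < 0) (hs : 0 ≤ B - A * (d + x)) (hd : x < d) : False := by
  nlinarith [mul_nonneg (le_of_lt (sub_pos.2 hd)) hs]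

private lemma quad2 {A B C d x : ℝ} (h : A * d ^ 2 - B * d + C = 0)
    (hf : 0 < A * x ^ 2 - B * x + C) (hs : 0 ≤ B - A * (d + x)) (hd : d < x) : False := by
  nlinarith [mul_nonneg (le_of_lt (sub_pos.2 hd)) hs]

private lemma quad3 {A B C d x : ℝ} (h : A * d ^ 2 - B * d + C = 0)
    (hf : A * x ^ 2 - B * x + C < 0) (hs : 0 ≤ A * (d + x) - B) (hd : d < x) : False := by
  nlinarith [mul_nonneg (le_of_lt (sub_pos.2 hd)) hs]

private lemma quad4 {A B C d x : ℝ} (h : A * d ^ 2 - B * d + C = 0)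
    (hf : 0 < A * x ^ 2 - B * x + C) (hs : 0 ≤ A * (d + x) - B) (hd : x < d) : False := by
  nlinarith [mul_nonneg (le_of_lt (sub_pos.2 hd)) hs]

private theorem cosθb (θ : ℝ) (hθ : θ = π / 339) :
    (0.9999570581 : ℝ) ≤ cos θ ∧ cos θ ≤ 0.9999570618 := by
  have hπl := Real.pi_gt_d6
  have hπu := Real.pi_lt_d6
  have hθl : (0.009267 : ℝ) < θ := by rw [hθ]; linarith
  have hθu : θ < (0.0092673 : ℝ) := by rw [hθ]; linarith
  have hx0 : (0 : ℝ) < θ := by linarith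
  have hb := Real.cos_bound (x := θ) (by rw [abs_of_pos hx0]; linarith)
  rw [abs_of_pos hx0, abs_le] at hb
  have h2u : θ ^ 2 < 0.0092673 ^ 2 := pow_lt_pow_left₀ hθu (by linarith) (by norm_num)
  have h2l : (0.009267 : ℝ) ^ 2 < θ ^ 2 := pow_lt_pow_left₀ hθl (by norm_num) (by norm_num)
  have h4u : θ ^ 4 < 0.0092673 ^ 4 := pow_lt_pow_left₀ hθu (by linarith) (by norm_num)
  have h4l : (0 : ℝ) ≤ θ ^ 4 := by positivity
  constructor <;> nlinarith [hb.1, hb.2]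

private theorem numc3 (c : ℝ) (h1 : (0.9999570581 : ℝ) ≤ c) (h2 : c ≤ 0.9999570618) :
    (0.9996135450 : ℝ) ≤ 4 * c ^ 3 - 3 * c ∧ 4 * c ^ 3 - 3 * c ≤ 0.9996135784 := by
  constructor <;>
    nlinarith [sq_nonneg (c - 0.9999570581), sq_nonneg (c - 0.9999570618),
      mul_nonneg (sub_nonneg.2 h1) (sub_nonneg.2 h1)]

private theorem numc4 (c : ℝ) (h1 : (0.9999570581 : ℝ) ≤ c) (h2 : c ≤ 0.9999570618) :
    (0.9993130033 : ℝ) ≤ 2 * (2 * c ^ 2 - 1) ^ 2 - 1 ∧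
      2 * (2 * c ^ 2 - 1) ^ 2 - 1 ≤ 0.9993130626 := by
  have hy : (0.9998282360 : ℝ) ≤ 2 * c ^ 2 - 1 ∧ 2 * c ^ 2 - 1 ≤ 0.9998282509 := by
    constructor <;> nlinarith
  constructor <;> nlinarith [hy.1, hy.2, sq_nonneg (2 * c ^ 2 - 1 - 0.9998282360),
    sq_nonneg (2 * c ^ 2 - 1 - 0.9998282509)]

private theorem numc5 (c c3 c4 : ℝ) (h1 : (0.9999570581 : ℝ) ≤ c) (h2 : c ≤ 0.9999570618)
    (h3 : (0.9996135450 : ℝ) ≤ c3) (h4 : c3 ≤ 0.9996135784)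
    (h5 : (0.9993130033 : ℝ) ≤ c4) (h6 : c4 ≤ 0.9993130626) :
    (0.9989266030 : ℝ) ≤ 2 * c4 * c - c3 ∧ 2 * c4 * c - c3 ≤ 0.9989267630 := by
  constructor <;>
    nlinarith [mul_nonneg (sub_nonneg.2 h5) (sub_nonneg.2 h1),
      mul_nonneg (sub_nonneg.2 h6) (sub_nonneg.2 h2)]

private theorem numc6 (c3 : ℝ) (h3 : (0.9996135450 : ℝ) ≤ c3) (h4 : c3 ≤ 0.9996135784) :
    (0.9984544780 : ℝ) ≤ 2 * c3 ^ 2 - 1 ∧ 2 * c3 ^ 2 - 1 ≤ 0.9984546130 := by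
  constructor <;> nlinarith [sq_nonneg (c3 - 0.9996135450), sq_nonneg (c3 - 0.9996135784)]

private theorem numc10 (c5 : ℝ) (h3 : (0.9989266030 : ℝ) ≤ c5) (h4 : c5 ≤ 0.9989267630) :
    (0.9957086700 : ℝ) ≤ 2 * c5 ^ 2 - 1 ∧ 2 * c5 ^ 2 - 1 ≤ 0.9957094100 := by
  constructor <;> nlinarith [sq_nonneg (c5 - 0.9989266030), sq_nonneg (c5 - 0.9989267630)]

private theorem loc1 (c c4 d : ℝ) (hc1 : (0.9999570581 : ℝ) ≤ c) (hc2 : c ≤ 0.9999570618)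
    (h41 : (0.9993130033 : ℝ) ≤ c4) (h42 : c4 ≤ 0.9993130626)
    (hq : (1 - c4 ^ 2) * d ^ 2 - 2 * c * (1 - c4) * d + (1 - c ^ 2) = 0)
    (hd0 : 0 < d) (hd1 : d < 1) :
    (0.066984 ≤ d ∧ d ≤ 0.067006) ∨ (0.933294 ≤ d ∧ d ≤ 0.933317) := by
  rcases le_or_gt d (1 / 2) with hcase | hcase
  · left
    constructor
    · by_contra hcon; push_neg at hcon
      refine quad2 hq ?_ ?_ hcon
      · nlinarith [mul_nonneg (sub_nonneg.2 hc1) (sub_nonneg.2 h41),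
          mul_nonneg (sub_nonneg.2 hc2) (sub_nonneg.2 h42), sq_nonneg (c - c4)]
      · nlinarith [hd0, mul_nonneg (sub_nonneg.2 h41) (sub_nonneg.2 h42)]
    · by_contra hcon; push_neg at hcon
      refine quad1 hq ?_ ?_ hcon
      · nlinarith [mul_nonneg (sub_nonneg.2 hc1) (sub_nonneg.2 h41),
          mul_nonneg (sub_nonneg.2 hc2) (sub_nonneg.2 h42), sq_nonneg (c - c4)]
      · nlinarith [hcase, mul_nonneg (sub_nonneg.2 h41) (sub_nonneg.2 h42)]
  · right
    constructor
    · by_contra hcon; push_neg at hcon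
      refine quad3 hq ?_ ?_ hcon
      · nlinarith [mul_nonneg (sub_nonneg.2 hc1) (sub_nonneg.2 h41),
          mul_nonneg (sub_nonneg.2 hc2) (sub_nonneg.2 h42), sq_nonneg (c - c4)]
      · nlinarith [hcase, mul_nonneg (sub_nonneg.2 h41) (sub_nonneg.2 h42)]
    · by_contra hcon; push_neg at hcon
      refine quad4 hq ?_ ?_ hcon
      · nlinarith [mul_nonneg (sub_nonneg.2 hc1) (sub_nonneg.2 h41),
          mul_nonneg (sub_nonneg.2 hc2) (sub_nonneg.2 h42), sq_nonneg (c - c4)]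
      · nlinarith [hcase, mul_nonneg (sub_nonneg.2 h41) (sub_nonneg.2 h42)]

private theorem loc2 (c c10 d : ℝ) (hc1 : (0.9999570581 : ℝ) ≤ c) (hc2 : c ≤ 0.9999570618)
    (h41 : (0.9957086700 : ℝ) ≤ c10) (h42 : c10 ≤ 0.9957094100)
    (hq : (1 - c10 ^ 2) * d ^ 2 - 2 * c * (1 - c10) * d + (1 - c ^ 2) = 0)
    (hd0 : 0 < d) (hd1 : d < 1) :
    (0.0101050 ≤ d ∧ d ≤ 0.0101136) ∨ (0.9919935 ≤ d ∧ d ≤ 0.9920020) := by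
  rcases le_or_gt d (1 / 2) with hcase | hcase
  · left
    constructor
    · by_contra hcon; push_neg at hcon
      refine quad2 hq ?_ ?_ hcon
      · nlinarith [mul_nonneg (sub_nonneg.2 hc1) (sub_nonneg.2 h41),
          mul_nonneg (sub_nonneg.2 hc2) (sub_nonneg.2 h42), sq_nonneg (c - c10)]
      · nlinarith [hd0, mul_nonneg (sub_nonneg.2 h41) (sub_nonneg.2 h42)]
    · by_contra hcon; push_neg at hcon
      refine quad1 hq ?_ ?_ hcon
      · nlinarith [mul_nonneg (sub_nonneg.2 hc1) (sub_nonneg.2 h41),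
          mul_nonneg (sub_nonneg.2 hc2) (sub_nonneg.2 h42), sq_nonneg (c - c10)]
      · nlinarith [hcase, mul_nonneg (sub_nonneg.2 h41) (sub_nonneg.2 h42)]
  · right
    constructor
    · by_contra hcon; push_neg at hcon
      refine quad3 hq ?_ ?_ hcon
      · nlinarith [mul_nonneg (sub_nonneg.2 hc1) (sub_nonneg.2 h41),
          mul_nonneg (sub_nonneg.2 hc2) (sub_nonneg.2 h42), sq_nonneg (c - c10)]
      · nlinarith [hcase, mul_nonneg (sub_nonneg.2 h41) (sub_nonneg.2 h42)]
    · by_contra hcon; push_neg at hcon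
      refine quad4 hq ?_ ?_ hcon
      · nlinarith [mul_nonneg (sub_nonneg.2 hc1) (sub_nonneg.2 h41),
          mul_nonneg (sub_nonneg.2 hc2) (sub_nonneg.2 h42), sq_nonneg (c - c10)]
      · nlinarith [hcase, mul_nonneg (sub_nonneg.2 h41) (sub_nonneg.2 h42)]


private theorem rbd1S (c c4 d : ℝ)
    (hc1 : (0.9999570581:ℝ) ≤ c) (hc2 : c ≤ 0.9999570618)
    (h41 : (0.9993130033:ℝ) ≤ c4) (h42 : c4 ≤ 0.9993130626)
    (h1l : (0.066984:ℝ) ≤ d) (h1u : d ≤ 0.067006) :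
    (0.9329970:ℝ) ≤ c - d * c4 ∧ c - d * c4 ≤ 0.9330191 := by
  constructor <;>
    nlinarith [mul_nonneg (sub_nonneg.2 h1l) (sub_nonneg.2 h41),
      mul_nonneg (sub_nonneg.2 h1u) (sub_nonneg.2 h42)]

private theorem rbd1B (c c4 d : ℝ)
    (hc1 : (0.9999570581:ℝ) ≤ c) (hc2 : c ≤ 0.9999570618)
    (h41 : (0.9993130033:ℝ) ≤ c4) (h42 : c4 ≤ 0.9993130626)
    (h1l : (0.933294:ℝ) ≤ d) (h1u : d ≤ 0.933317) :
    (0.0672811:ℝ) ≤ c - d * c4 ∧ c - d * c4 ≤ 0.0673043 := by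
  constructor <;>
    nlinarith [mul_nonneg (sub_nonneg.2 h1l) (sub_nonneg.2 h41),
      mul_nonneg (sub_nonneg.2 h1u) (sub_nonneg.2 h42)]

private theorem rbd2S (c c10 d : ℝ)
    (hc1 : (0.9999570581:ℝ) ≤ c) (hc2 : c ≤ 0.9999570618)
    (h41 : (0.9957086700:ℝ) ≤ c10) (h42 : c10 ≤ 0.9957094100)
    (h1l : (0.0101050:ℝ) ≤ d) (h1u : d ≤ 0.0101136) :
    (0.9898868:ℝ) ≤ c - d * c10 ∧ c - d * c10 ≤ 0.9898955 := by
  constructor <;>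
    nlinarith [mul_nonneg (sub_nonneg.2 h1l) (sub_nonneg.2 h41),
      mul_nonneg (sub_nonneg.2 h1u) (sub_nonneg.2 h42)]

private theorem rbd2B (c c10 d : ℝ)
    (hc1 : (0.9999570581:ℝ) ≤ c) (hc2 : c ≤ 0.9999570618)
    (h41 : (0.9957086700:ℝ) ≤ c10) (h42 : c10 ≤ 0.9957094100)
    (h1l : (0.9919935:ℝ) ≤ d) (h1u : d ≤ 0.9920020) :
    (0.0122110:ℝ) ≤ c - d * c10 ∧ c - d * c10 ≤ 0.0122206 := by
  constructor <;>
    nlinarith [mul_nonneg (sub_nonneg.2 h1l) (sub_nonneg.2 h41),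
      mul_nonneg (sub_nonneg.2 h1u) (sub_nonneg.2 h42)]

private theorem fin_SS (d₁ d₂ r₁ r₂ c6 : ℝ)
    (h1l : (0.066984:ℝ) ≤ d₁) (h1u : d₁ ≤ 0.067006)
    (h2l : (0.0101050:ℝ) ≤ d₂) (h2u : d₂ ≤ 0.0101136)
    (hr1l : (0.9329970:ℝ) ≤ r₁) (hr2l : (0.9898868:ℝ) ≤ r₂)
    (hc1 : (0.9984544780:ℝ) ≤ c6) :
    d₁ ^ 2 + d₂ ^ 2 - 2 * d₁ * d₂ * c6 < (r₁ + r₂) ^ 2 := by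
  nlinarith [sq_nonneg (r₁ + r₂ - 1.9228838),
    mul_nonneg (sub_nonneg.2 h1l) (sub_nonneg.2 h2l),
    mul_nonneg (sub_nonneg.2 h1l) (sub_nonneg.2 hc1),
    mul_nonneg (sub_nonneg.2 h2l) (sub_nonneg.2 hc1),
    mul_nonneg (mul_nonneg (sub_nonneg.2 h1l) (sub_nonneg.2 h2l)) (sub_nonneg.2 hc1)]

private theorem fin_SB (d₁ d₂ r₁ r₂ c6 : ℝ)
    (h1l : (0.066984:ℝ) ≤ d₁) (h1u : d₁ ≤ 0.067006)
    (h2l : (0.9919935:ℝ) ≤ d₂) (h2u : d₂ ≤ 0.9920020)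
    (hr1l : (0.9329970:ℝ) ≤ r₁) (hr2l : (0.0122110:ℝ) ≤ r₂)
    (hc1 : (0.9984544780:ℝ) ≤ c6) :
    d₁ ^ 2 + d₂ ^ 2 - 2 * d₁ * d₂ * c6 < (r₁ + r₂) ^ 2 := by
  nlinarith [sq_nonneg (r₁ + r₂ - 0.945208),
    mul_nonneg (sub_nonneg.2 h1l) (sub_nonneg.2 h2l),
    mul_nonneg (sub_nonneg.2 h1l) (sub_nonneg.2 hc1),
    mul_nonneg (sub_nonneg.2 h2l) (sub_nonneg.2 hc1),
    mul_nonneg (mul_nonneg (sub_nonneg.2 h1l) (sub_nonneg.2 h2l)) (sub_nonneg.2 hc1)]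

private theorem fin_BS (d₁ d₂ r₁ r₂ c6 : ℝ)
    (h1l : (0.933294:ℝ) ≤ d₁) (h1u : d₁ ≤ 0.933317)
    (h2l : (0.0101050:ℝ) ≤ d₂) (h2u : d₂ ≤ 0.0101136)
    (hr1l : (0.0672811:ℝ) ≤ r₁) (hr2l : (0.9898868:ℝ) ≤ r₂)
    (hc1 : (0.9984544780:ℝ) ≤ c6) :
    d₁ ^ 2 + d₂ ^ 2 - 2 * d₁ * d₂ * c6 < (r₁ + r₂) ^ 2 := by
  nlinarith [sq_nonneg (r₁ + r₂ - 1.0571679),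
    mul_nonneg (sub_nonneg.2 h1l) (sub_nonneg.2 h2l),
    mul_nonneg (sub_nonneg.2 h1l) (sub_nonneg.2 hc1),
    mul_nonneg (sub_nonneg.2 h2l) (sub_nonneg.2 hc1),
    mul_nonneg (mul_nonneg (sub_nonneg.2 h1l) (sub_nonneg.2 h2l)) (sub_nonneg.2 hc1)]

private theorem fin_BB (d₁ d₂ r₁ r₂ c6 : ℝ)
    (h1l : (0.933294:ℝ) ≤ d₁) (h1u : d₁ ≤ 0.933317)
    (h2l : (0.9919935:ℝ) ≤ d₂) (h2u : d₂ ≤ 0.9920020)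
    (hr1l : (0.0672811:ℝ) ≤ r₁) (hr2l : (0.0122110:ℝ) ≤ r₂)
    (hc1 : (0.9984544780:ℝ) ≤ c6) :
    d₁ ^ 2 + d₂ ^ 2 - 2 * d₁ * d₂ * c6 < (r₁ + r₂) ^ 2 := by
  nlinarith [sq_nonneg (r₁ + r₂ - 0.0794921),
    mul_nonneg (sub_nonneg.2 h1l) (sub_nonneg.2 h2l),
    mul_nonneg (sub_nonneg.2 h1l) (sub_nonneg.2 hc1),
    mul_nonneg (sub_nonneg.2 h2l) (sub_nonneg.2 hc1),
    mul_nonneg (mul_nonneg (sub_nonneg.2 h1l) (sub_nonneg.2 h2l)) (sub_nonneg.2 hc1)]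

set_option maxHeartbeats 1000000 in
/-- Subcase ii of Theorem 3: with `θ = π/339` (`k = 340`), disks `Q₁, Q₂`
(radii `r₁, r₂`, centers at distances `d₁, d₂` from `p` at angles `4θ` and
`10θ` from `pq`, each through two consecutive vertices and tangent to the
line `ℓ` at distance `cos θ` from `p`) satisfy
`d₁² + d₂² − 2d₁d₂cos(6θ) < (r₁ + r₂)²`, i.e. they intersect. -/
theorem gadget_340_inequality (θ d₁ r₁ d₂ r₂ : ℝ)
    (hθ : θ = π / 339)
    (hd₁ : 0 < d₁) (hr₁ : 0 < r₁) (hd₂ : 0 < d₂) (hr₂ : 0 < r₂)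
    (e₁ : r₁ ^ 2 = d₁ ^ 2 - 2 * d₁ * cos θ + 1)
    (e₂ : d₁ * cos (4 * θ) + r₁ = cos θ)
    (e₃ : r₂ ^ 2 = d₂ ^ 2 - 2 * d₂ * cos θ + 1)
    (e₄ : d₂ * cos (10 * θ) + r₂ = cos θ)
    (hd₁' : d₁ < 1) (hd₂' : d₂ < 1) :
    d₁ ^ 2 + d₂ ^ 2 - 2 * d₁ * d₂ * cos (6 * θ) < (r₁ + r₂) ^ 2 := by
  have hc := cosθb θ hθ
  -- multiple-angle identities
  have h3v : cos (3 * θ) = 4 * cos θ ^ 3 - 3 * cos θ := Real.cos_three_mul θ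
  have h4v : cos (4 * θ) = 2 * (2 * cos θ ^ 2 - 1) ^ 2 - 1 := by
    rw [show (4 : ℝ) * θ = 2 * (2 * θ) by ring, Real.cos_two_mul, Real.cos_two_mul]
  have h6v : cos (6 * θ) = 2 * cos (3 * θ) ^ 2 - 1 := by
    rw [show (6 : ℝ) * θ = 2 * (3 * θ) by ring, Real.cos_two_mul]
  have h5v : cos (5 * θ) = 2 * cos (4 * θ) * cos θ - cos (3 * θ) := by
    have ha : cos (4 * θ + θ) = cos (4 * θ) * cos θ - sin (4 * θ) * sin θ := Real.cos_add _ _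
    have hb : cos (4 * θ - θ) = cos (4 * θ) * cos θ + sin (4 * θ) * sin θ := Real.cos_sub _ _
    rw [show 4 * θ + θ = 5 * θ by ring] at ha
    rw [show 4 * θ - θ = 3 * θ by ring] at hb
    linarith
  have h10v : cos (10 * θ) = 2 * cos (5 * θ) ^ 2 - 1 := by
    rw [show (10 : ℝ) * θ = 2 * (5 * θ) by ring, Real.cos_two_mul]
  -- numeric intervals for the cosines
  have hc3 : (0.9996135450 : ℝ) ≤ cos (3 * θ) ∧ cos (3 * θ) ≤ 0.9996135784 := by
    rw [h3v]; exact numc3 _ hc.1 hc.2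
  have hc4 : (0.9993130033 : ℝ) ≤ cos (4 * θ) ∧ cos (4 * θ) ≤ 0.9993130626 := by
    rw [h4v]; exact numc4 _ hc.1 hc.2
  have hc5 : (0.9989266030 : ℝ) ≤ cos (5 * θ) ∧ cos (5 * θ) ≤ 0.9989267630 := by
    rw [h5v]; exact numc5 _ _ _ hc.1 hc.2 hc3.1 hc3.2 hc4.1 hc4.2
  have hc6 : (0.9984544780 : ℝ) ≤ cos (6 * θ) ∧ cos (6 * θ) ≤ 0.9984546130 := by
    rw [h6v]; exact numc6 _ hc3.1 hc3.2
  have hc10 : (0.9957086700 : ℝ) ≤ cos (10 * θ) ∧ cos (10 * θ) ≤ 0.9957094100 := by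
    rw [h10v]; exact numc10 _ hc5.1 hc5.2
  -- the tangency/circumscription equations give quadratics for d₁ and d₂
  have hr₁e : r₁ = cos θ - d₁ * cos (4 * θ) := by linarith
  have hr₂e : r₂ = cos θ - d₂ * cos (10 * θ) := by linarith
  have hq1 : (1 - cos (4 * θ) ^ 2) * d₁ ^ 2 - 2 * cos θ * (1 - cos (4 * θ)) * d₁
      + (1 - cos θ ^ 2) = 0 := by
    linear_combination (-1 : ℝ) * e₁ + (r₁ + cos θ - d₁ * cos (4 * θ)) * hr₁e
  have hq2 : (1 - cos (10 * θ) ^ 2) * d₂ ^ 2 - 2 * cos θ * (1 - cos (10 * θ)) * d₂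
      + (1 - cos θ ^ 2) = 0 := by
    linear_combination (-1 : ℝ) * e₃ + (r₂ + cos θ - d₂ * cos (10 * θ)) * hr₂e
  have hd1b := loc1 _ _ _ hc.1 hc.2 hc4.1 hc4.2 hq1 hd₁ hd₁'
  have hd2b := loc2 _ _ _ hc.1 hc.2 hc10.1 hc10.2 hq2 hd₂ hd₂'
  rcases hd1b with ⟨h1l, h1u⟩ | ⟨h1l, h1u⟩ <;> rcases hd2b with ⟨h2l, h2u⟩ | ⟨h2l, h2u⟩
  · have hrb1 := rbd1S _ _ _ hc.1 hc.2 hc4.1 hc4.2 h1l h1u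
    have hrb2 := rbd2S _ _ _ hc.1 hc.2 hc10.1 hc10.2 h2l h2u
    rw [← hr₁e] at hrb1; rw [← hr₂e] at hrb2
    exact fin_SS _ _ _ _ _ h1l h1u h2l h2u hrb1.1 hrb2.1 hc6.1
  · have hrb1 := rbd1S _ _ _ hc.1 hc.2 hc4.1 hc4.2 h1l h1u
    have hrb2 := rbd2B _ _ _ hc.1 hc.2 hc10.1 hc10.2 h2l h2u
    rw [← hr₁e] at hrb1; rw [← hr₂e] at hrb2
    exact fin_SB _ _ _ _ _ h1l h1u h2l h2u hrb1.1 hrb2.1 hc6.1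
  · have hrb1 := rbd1B _ _ _ hc.1 hc.2 hc4.1 hc4.2 h1l h1u
    have hrb2 := rbd2S _ _ _ hc.1 hc.2 hc10.1 hc10.2 h2l h2u
    rw [← hr₁e] at hrb1; rw [← hr₂e] at hrb2
    exact fin_BS _ _ _ _ _ h1l h1u h2l h2u hrb1.1 hrb2.1 hc6.1
  · have hrb1 := rbd1B _ _ _ hc.1 hc.2 hc4.1 hc4.2 h1l h1u
    have hrb2 := rbd2B _ _ _ hc.1 hc.2 hc10.1 hc10.2 h2l h2u
    rw [← hr₁e] at hrb1; rw [← hr₂e] at hrb2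
    exact fin_BB _ _ _ _ _ h1l h1u h2l h2u hrb1.1 hrb2.1 hc6.1
end
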